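/- arXiv:1701.02445 — 10 statements merged into one kernel-verified Lean document; each statement's English description precedes it below -/
import Mathlib

section
/- Let L be a complete residuated lattice, Y ≠ ∅, and * an idempotent truth-stressing hedge (satisfying 1*=1, a* ≤ a, (a→b)* ≤ a*→b*, and a** = a*). An operator C : L^Y → L^Y is an L*-closure operator if and only if C is extensive (A ⊆ C(A)), isotone (A ⊆ B implies C(A) ⊆ C(B)), idempotent (C(C(A)) ⊆ C(A)), and satisfies C(a* → C(A)) ⊆ a* → C(A) for all a ∈ L and A ∈ L^Y. -/
/-- Characterization of L*-closure operators for an idempotent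
truth-stressing hedge. -/
theorem Lstar_closure_char {L : Type*} [CompleteLattice L]
    (mul arr : L → L → L) (star : L → L)
    (hassoc : ∀ a b c : L, mul (mul a b) c = mul a (mul b c))
    (hcomm : ∀ a b : L, mul a b = mul b a)
    (hone : ∀ a : L, mul ⊤ a = a)
    (hadj : ∀ a b c : L, mul a b ≤ c ↔ b ≤ arr a c)
    (hs1 : star ⊤ = ⊤)
    (hs2 : ∀ a : L, star a ≤ a)
    (hs3 : ∀ a b : L, star (arr a b) ≤ arr (star a) (star b))
    (hs4 : ∀ a : L, star (star a) = star a)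
    {Y : Type*} [Nonempty Y] (C : (Y → L) → (Y → L)) :
    ((∀ A, A ≤ C A) ∧
     (∀ A B : Y → L,
       star (⨅ y, arr (A y) (B y)) ≤ ⨅ y, arr (C A y) (C B y)) ∧
     (∀ A, C (C A) ≤ C A)) ↔
    ((∀ A, A ≤ C A) ∧
     (∀ A B : Y → L, A ≤ B → C A ≤ C B) ∧
     (∀ A, C (C A) ≤ C A) ∧
     (∀ (a : L) (A : Y → L),
       C (fun y => arr (star a) (C A y)) ≤ fun y => arr (star a) (C A y))) := by
  -- basic residuation facts
  have mp : ∀ a b : L, mul a (arr a b) ≤ b := fun a b => (hadj a (arr a b) b).mpr le_rfl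
  have arr_top : ∀ a b : L, a ≤ b → (⊤ : L) ≤ arr a b := by
    intro a b h
    exact (hadj a ⊤ b).mp (by rw [hcomm, hone]; exact h)
  have of_top : ∀ a b : L, (⊤ : L) ≤ arr a b → a ≤ b := by
    intro a b h
    have := (hadj a ⊤ b).mpr h
    rwa [hcomm, hone] at this
  have smono : ∀ a b : L, a ≤ b → star a ≤ star b := by
    intro a b h
    have h1 : star (arr a b) ≤ arr (star a) (star b) := hs3 a b
    have h2 : arr a b = ⊤ := le_antisymm le_top (arr_top a b h)
    rw [h2, hs1] at h1
    exact of_top _ _ h1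
  have mul_mono_right : ∀ a b b' : L, b ≤ b' → mul a b ≤ mul a b' := by
    intro a b b' h
    exact (hadj a b (mul a b')).mpr (h.trans ((hadj a b' (mul a b')).mp le_rfl))
  have arr_mono_right : ∀ a b b' : L, b ≤ b' → arr a b ≤ arr a b' := by
    intro a b b' h
    exact (hadj a (arr a b) b').mp ((mp a b).trans h)
  constructor
  · rintro ⟨h1, h2, h3⟩
    refine ⟨h1, ?_, h3, ?_⟩
    · intro A B hAB
      intro y
      have hinf : (⊤ : L) ≤ ⨅ y, arr (A y) (B y) :=
        le_iInf fun y => arr_top _ _ (hAB y)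
      have : (⊤ : L) ≤ arr (C A y) (C B y) := by
        calc (⊤ : L) = star ⊤ := hs1.symm
          _ ≤ star (⨅ y, arr (A y) (B y)) := smono _ _ hinf
          _ ≤ ⨅ y, arr (C A y) (C B y) := h2 A B
          _ ≤ arr (C A y) (C B y) := iInf_le _ y
      exact of_top _ _ this
    · intro a A
      intro y
      have h0 : star a ≤ ⨅ y, arr (arr (star a) (C A y)) (C A y) := by
        refine le_iInf fun y => (hadj _ _ _).mp ?_
        rw [hcomm]; exact mp _ _
      have hstep : star a ≤ arr (C (fun y => arr (star a) (C A y)) y) (C (C A) y) := by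
        calc star a = star (star a) := (hs4 a).symm
          _ ≤ star (⨅ y, arr (arr (star a) (C A y)) (C A y)) := smono _ _ h0
          _ ≤ ⨅ y, arr (C (fun y => arr (star a) (C A y)) y) (C (C A) y) :=
              h2 (fun y => arr (star a) (C A y)) (C A)
          _ ≤ _ := iInf_le _ y
      have hmul : mul (C (fun y => arr (star a) (C A y)) y) (star a) ≤ C A y :=
        ((hadj _ _ _).mpr hstep).trans (h3 A y)
      rw [hcomm] at hmul
      exact (hadj _ _ _).mp hmul
  · rintro ⟨h1, h2, h3, h4⟩
    refine ⟨h1, ?_, h3⟩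
    intro A B
    set s := star (⨅ y, arr (A y) (B y)) with hs
    refine le_iInf fun y => ?_
    have hA : A ≤ fun y => arr s (C B y) := by
      intro y
      have hsle : s ≤ arr (A y) (B y) := (hs2 _).trans (iInf_le _ y)
      have : mul s (A y) ≤ B y := by
        rw [hcomm]
        exact ((mul_mono_right (A y) s _ hsle).trans (mp _ _))
      exact ((hadj _ _ _).mp this).trans (arr_mono_right _ _ _ (h1 B y))
    have hCA : C A y ≤ arr s (C B y) :=
      ((h2 _ _ hA).trans (h4 (⨅ y, arr (A y) (B y)) B)) y
    have : mul s (C A y) ≤ C B y := (hadj _ _ _).mpr hCA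
    rw [hcomm] at this
    exact (hadj _ _ _).mp this
end

section
/- Let L be a complete residuated lattice, Y ≠ ∅, and K an ≤-filter in L (a nonempty upward-closed subset). An operator C : L^Y → L^Y is an L_K-closure operator if and only if C is extensive, isotone (A ⊆ B implies C(A) ⊆ C(B)), idempotent (C(C(A)) ⊆ C(A)), and satisfies C(a → C(A)) ⊆ a → C(A) for all a ∈ K and A ∈ L^Y. -/
/-- Characterization of L_K-closure operators for an ≤-filter K. -/
theorem LK_closure_char {L : Type*} [CompleteLattice L]
    (mul arr : L → L → L)
    (hassoc : ∀ a b c : L, mul (mul a b) c = mul a (mul b c))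
    (hcomm : ∀ a b : L, mul a b = mul b a)
    (hone : ∀ a : L, mul ⊤ a = a)
    (hadj : ∀ a b c : L, mul a b ≤ c ↔ b ≤ arr a c)
    (K : Set L) (hKne : K.Nonempty)
    (hKup : ∀ a ∈ K, ∀ b : L, a ≤ b → b ∈ K)
    {Y : Type*} [Nonempty Y] (C : (Y → L) → (Y → L)) :
    ((∀ A, A ≤ C A) ∧
     (∀ A B : Y → L, (⨅ y, arr (A y) (B y)) ∈ K →
       (⨅ y, arr (A y) (B y)) ≤ ⨅ y, arr (C A y) (C B y)) ∧
     (∀ A, C (C A) ≤ C A)) ↔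
    ((∀ A, A ≤ C A) ∧
     (∀ A B : Y → L, A ≤ B → C A ≤ C B) ∧
     (∀ A, C (C A) ≤ C A) ∧
     (∀ a ∈ K, ∀ A : Y → L,
       C (fun y => arr a (C A y)) ≤ fun y => arr a (C A y))) := by
  have htopK : (⊤ : L) ∈ K := by
    obtain ⟨a, ha⟩ := hKne
    exact hKup a ha ⊤ le_top
  constructor
  · rintro ⟨hext, hgrad, hidem⟩
    refine ⟨hext, ?_, hidem, ?_⟩
    · intro A B hAB
      have hS : (⊤ : L) ≤ ⨅ y, arr (A y) (B y) :=
        le_iInf fun y => (hadj (A y) ⊤ (B y)).mp (by rw [hcomm, hone]; exact hAB y)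
      have hmem : (⨅ y, arr (A y) (B y)) ∈ K := hKup ⊤ htopK _ hS
      have h2 := hgrad A B hmem
      intro y
      have h3 : (⊤ : L) ≤ arr (C A y) (C B y) :=
        le_trans hS (le_trans h2 (iInf_le _ y))
      have h4 := (hadj (C A y) ⊤ (C B y)).mpr h3
      rwa [hcomm, hone] at h4
    · intro a ha A
      set B : Y → L := fun y => arr a (C A y) with hB
      have hS : a ≤ ⨅ y, arr (B y) (C A y) := by
        refine le_iInf fun y => (hadj (B y) a (C A y)).mp ?_
        rw [hcomm]
        exact (hadj a (B y) (C A y)).mpr le_rfl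
      have hmem : (⨅ y, arr (B y) (C A y)) ∈ K := hKup a ha _ hS
      have h2 := hgrad B (C A) hmem
      intro y
      refine (hadj a (C B y) (C A y)).mp ?_
      rw [hcomm]
      have h3 : a ≤ arr (C B y) (C (C A) y) :=
        le_trans hS (le_trans h2 (iInf_le _ y))
      exact le_trans ((hadj (C B y) a (C (C A) y)).mpr h3) (hidem A y)
  · rintro ⟨hext, hmono, hidem, hK⟩
    refine ⟨hext, ?_, hidem⟩
    intro A B hmem
    set s := ⨅ y, arr (A y) (B y) with hs
    refine le_iInf fun y => (hadj (C A y) s (C B y)).mp ?_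
    rw [hcomm]
    have hA : A ≤ fun y => arr s (C B y) := by
      intro y
      refine (hadj s (A y) (C B y)).mp ?_
      rw [hcomm]
      exact le_trans ((hadj (A y) s (B y)).mpr (iInf_le _ y)) (hext B y)
    have hCA : C A ≤ C (fun y => arr s (C B y)) := hmono _ _ hA
    have hfin : C A y ≤ arr s (C B y) := le_trans (hCA y) (hK s hmem B y)
    exact (hadj s (C A y) (C B y)).mpr hfin
end

section
/- Let L be a complete lattice and S an L-parameterization (a set of isotone Galois connections in L containing the identity pair ⟨id, id⟩). An operator C : L → L is an S-closure operator if and only if C is extensive (a ≤ C(a)) and satisfies: for all a, b ∈ L and ⟨f, g⟩ ∈ S, a ≤ g(C(b)) implies C(a) ≤ g(C(b)). -/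
/-- An operator is an S-closure operator iff it is extensive and satisfies
the combined monotony-idempotency condition. -/
theorem Sclosure_iff_mon_idm {L : Type*} [CompleteLattice L]
    (S : Set ((L → L) × (L → L)))
    (hS : ∀ p ∈ S, ∀ a b : L, p.1 a ≤ b ↔ a ≤ p.2 b)
    (hid : ((id : L → L), (id : L → L)) ∈ S)
    (C : L → L) :
    ((∀ a, a ≤ C a) ∧
     (∀ a b : L, a ≤ b → C a ≤ C b) ∧
     (∀ a : L, ∀ p ∈ S, C (p.2 (C a)) ≤ p.2 (C a))) ↔
    ((∀ a, a ≤ C a) ∧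
     (∀ a b : L, ∀ p ∈ S, a ≤ p.2 (C b) → C a ≤ p.2 (C b))) := by
  constructor
  · rintro ⟨hext, hmono, hidem⟩
    refine ⟨hext, fun a b p hp h => ?_⟩
    exact le_trans (hmono _ _ h) (hidem b p hp)
  · rintro ⟨hext, hmi⟩
    refine ⟨hext, fun a b h => ?_, fun a p hp => ?_⟩
    · exact hmi a b _ hid (le_trans h (hext b))
    · exact hmi _ a p hp le_rfl
end

section
/- Let L be a complete lattice and S an L-parameterization. An operator C : L → L is an S-closure operator if and only if C is extensive (a ≤ C(a)), satisfies C(C(a)) ≤ C(a), and for all a, b ∈ L and ⟨f, g⟩ ∈ S, a ≤ g(b) implies C(a) ≤ g(C(b)). -/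
/-- An operator is an S-closure operator iff it is extensive, idempotent,
and satisfies the alternative monotony condition. -/
theorem Sclosure_iff_mon_alt {L : Type*} [CompleteLattice L]
    (S : Set ((L → L) × (L → L)))
    (hS : ∀ p ∈ S, ∀ a b : L, p.1 a ≤ b ↔ a ≤ p.2 b)
    (hid : ((id : L → L), (id : L → L)) ∈ S)
    (C : L → L) :
    ((∀ a, a ≤ C a) ∧
     (∀ a b : L, a ≤ b → C a ≤ C b) ∧
     (∀ a : L, ∀ p ∈ S, C (p.2 (C a)) ≤ p.2 (C a))) ↔
    ((∀ a, a ≤ C a) ∧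
     (∀ a, C (C a) ≤ C a) ∧
     (∀ a b : L, ∀ p ∈ S, a ≤ p.2 b → C a ≤ p.2 (C b))) := by
  have gmono : ∀ p ∈ S, ∀ a b : L, a ≤ b → p.2 a ≤ p.2 b := by
    intro p hp a b hab
    exact (hS p hp _ _).mp (((hS p hp _ _).mpr le_rfl).trans hab)
  constructor
  · rintro ⟨hext, hmon, hcl⟩
    refine ⟨hext, fun a => by simpa using hcl a _ hid, ?_⟩
    intro a b p hp hab
    exact (hmon _ _ (hab.trans (gmono p hp _ _ (hext b)))).trans (hcl b p hp)
  · rintro ⟨hext, hidem, halt⟩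
    refine ⟨hext, ?_, ?_⟩
    · intro a b hab
      simpa using halt a b _ hid hab
    · intro a p hp
      exact (halt _ _ p hp le_rfl).trans (gmono p hp _ _ (hidem a))
end

section
/- Let C : L → L be an ordinary closure operator in a complete lattice L (extensive, isotone, idempotent) and S an L-parameterization. Then the following are equivalent: (1) C is an S-closure operator; (2) f(C(a)) ≤ C(f(a)) for all a ∈ L and ⟨f,g⟩ ∈ S; (3) C(g(a)) ≤ g(C(a)) for all a ∈ L and ⟨f,g⟩ ∈ S. -/
/-- For an ordinary closure operator, being an S-closure operator is
equivalent to either of the adjoint-exchange inequalities. -/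
theorem Sclosure_tfae {L : Type*} [CompleteLattice L]
    (S : Set ((L → L) × (L → L)))
    (hS : ∀ p ∈ S, ∀ a b : L, p.1 a ≤ b ↔ a ≤ p.2 b)
    (hid : ((id : L → L), (id : L → L)) ∈ S)
    (C : L → L)
    (hext : ∀ a, a ≤ C a)
    (hmon : ∀ a b : L, a ≤ b → C a ≤ C b)
    (hidm : ∀ a, C (C a) ≤ C a) :
    ((∀ a : L, ∀ p ∈ S, C (p.2 (C a)) ≤ p.2 (C a)) ↔
      (∀ a : L, ∀ p ∈ S, p.1 (C a) ≤ C (p.1 a))) ∧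
    ((∀ a : L, ∀ p ∈ S, C (p.2 (C a)) ≤ p.2 (C a)) ↔
      (∀ a : L, ∀ p ∈ S, C (p.2 a) ≤ p.2 (C a))) := by
  have gmono : ∀ p ∈ S, ∀ x y : L, x ≤ y → p.2 x ≤ p.2 y := by
    intro p hp x y hxy
    exact (hS p hp _ _).mp (((hS p hp _ _).mpr le_rfl).trans hxy)
  have h12 : (∀ a : L, ∀ p ∈ S, C (p.2 (C a)) ≤ p.2 (C a)) →
      (∀ a : L, ∀ p ∈ S, p.1 (C a) ≤ C (p.1 a)) := by
    intro h1 a p hp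
    rw [hS p hp]
    have h2 : a ≤ p.2 (C (p.1 a)) := (hS p hp a _).mp (hext _)
    calc C a ≤ C (p.2 (C (p.1 a))) := hmon _ _ h2
      _ ≤ p.2 (C (p.1 a)) := h1 _ p hp
  have h23 : (∀ a : L, ∀ p ∈ S, p.1 (C a) ≤ C (p.1 a)) →
      (∀ a : L, ∀ p ∈ S, C (p.2 a) ≤ p.2 (C a)) := by
    intro h2 a p hp
    rw [← hS p hp]
    calc p.1 (C (p.2 a)) ≤ C (p.1 (p.2 a)) := h2 _ p hp
      _ ≤ C a := hmon _ _ ((hS p hp _ _).mpr le_rfl)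
  have h31 : (∀ a : L, ∀ p ∈ S, C (p.2 a) ≤ p.2 (C a)) →
      (∀ a : L, ∀ p ∈ S, C (p.2 (C a)) ≤ p.2 (C a)) := by
    intro h3 a p hp
    calc C (p.2 (C a)) ≤ p.2 (C (C a)) := h3 _ p hp
      _ ≤ p.2 (C a) := gmono p hp _ _ (hidm a)
  exact ⟨⟨h12, fun h => h31 (h23 h)⟩, ⟨fun h => h23 (h12 h), h31⟩⟩
end

section
/- Let C : L → L be an operator on a complete lattice L satisfying a ≤ C(a) and C(C(a)) ≤ C(a). Then C is an S-closure operator if and only if for all a, b ∈ L and ⟨f,g⟩ ∈ S, a ≤ b implies f(C(a)) ≤ C(f(b)), and also if and only if for all a, b ∈ L and ⟨f,g⟩ ∈ S, a ≤ b implies C(g(a)) ≤ g(C(b)). -/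
/-- For an extensive operator with C(C a) ≤ C a, being an S-closure operator
is equivalent to either of the generalized isotony conditions. -/
theorem Sclosure_iff_gen_isotony {L : Type*} [CompleteLattice L]
    (S : Set ((L → L) × (L → L)))
    (hS : ∀ p ∈ S, ∀ a b : L, p.1 a ≤ b ↔ a ≤ p.2 b)
    (hid : ((id : L → L), (id : L → L)) ∈ S)
    (C : L → L)
    (hext : ∀ a, a ≤ C a)
    (hidm : ∀ a, C (C a) ≤ C a) :
    (((∀ a, a ≤ C a) ∧
      (∀ a b : L, a ≤ b → C a ≤ C b) ∧
      (∀ a : L, ∀ p ∈ S, C (p.2 (C a)) ≤ p.2 (C a))) ↔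
      (∀ a b : L, ∀ p ∈ S, a ≤ b → p.1 (C a) ≤ C (p.1 b))) ∧
    (((∀ a, a ≤ C a) ∧
      (∀ a b : L, a ≤ b → C a ≤ C b) ∧
      (∀ a : L, ∀ p ∈ S, C (p.2 (C a)) ≤ p.2 (C a))) ↔
      (∀ a b : L, ∀ p ∈ S, a ≤ b → C (p.2 a) ≤ p.2 (C b))) := by
  -- g is isotone
  have gmono : ∀ p ∈ S, ∀ a b : L, a ≤ b → p.2 a ≤ p.2 b := by
    intro p hp a b hab
    exact ((hS p hp _ _).mp (le_trans ((hS p hp _ _).mpr le_rfl) hab))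
  have counit : ∀ p ∈ S, ∀ a : L, p.1 (p.2 a) ≤ a := by
    intro p hp a; exact (hS p hp _ _).mpr le_rfl
  have unit : ∀ p ∈ S, ∀ a : L, a ≤ p.2 (p.1 a) := by
    intro p hp a; exact (hS p hp _ _).mp le_rfl
  constructor
  · constructor
    · rintro ⟨_, hmono, hcl⟩ a b p hp hab
      rw [hS p hp]
      have : a ≤ p.2 (C (p.1 b)) :=
        le_trans hab (le_trans (unit p hp b) (gmono p hp _ _ (hext _)))
      exact le_trans (hmono _ _ this) (hcl _ p hp)
    · intro h
      have hmono : ∀ a b : L, a ≤ b → C a ≤ C b := fun a b hab =>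
        h a b _ hid hab
      refine ⟨hext, hmono, ?_⟩
      intro a p hp
      rw [← hS p hp]
      have := h (p.2 (C a)) (p.2 (C a)) p hp le_rfl
      exact le_trans this (le_trans (hmono _ _ (counit p hp _)) (hidm a))
  · constructor
    · rintro ⟨_, hmono, hcl⟩ a b p hp hab
      exact le_trans (hmono _ _ (gmono p hp _ _ (le_trans hab (hext b)))) (hcl _ p hp)
    · intro h
      have hmono : ∀ a b : L, a ≤ b → C a ≤ C b := fun a b hab =>
        h a b _ hid hab
      refine ⟨hext, hmono, ?_⟩
      intro a p hp
      exact le_trans (h (C a) (C a) p hp le_rfl) (gmono p hp _ _ (hidm a))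
end

section
/- A subset 𝒮 of a complete lattice L is an S-closure system (closed under arbitrary infima and closed under applications of every upper adjoint g with ⟨f,g⟩ ∈ S) if and only if for every a ∈ L, the element ⋀{g(b) : b ∈ 𝒮, ⟨f,g⟩ ∈ S, a ≤ g(b)} belongs to 𝒮. -/
/-- Characterization of S-closure systems by a single condition. -/
theorem Ssystem_char {L : Type*} [CompleteLattice L]
    (S : Set ((L → L) × (L → L)))
    (hS : ∀ p ∈ S, ∀ a b : L, p.1 a ≤ b ↔ a ≤ p.2 b)
    (hid : ((id : L → L), (id : L → L)) ∈ S)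
    (𝒮 : Set L) :
    ((∀ T ⊆ 𝒮, sInf T ∈ 𝒮) ∧ (∀ a ∈ 𝒮, ∀ p ∈ S, p.2 a ∈ 𝒮)) ↔
    (∀ a : L,
      sInf {x : L | ∃ p ∈ S, ∃ b ∈ 𝒮, x = p.2 b ∧ a ≤ p.2 b} ∈ 𝒮) := by
  constructor
  · rintro ⟨hinf, hg⟩ a
    apply hinf
    rintro x ⟨p, hp, b, hb, rfl, -⟩
    exact hg b hb p hp
  · intro H
    constructor
    · intro T hT
      have key := H (sInf T)
      have heq : sInf {x : L | ∃ p ∈ S, ∃ b ∈ 𝒮, x = p.2 b ∧ sInf T ≤ p.2 b} = sInf T := by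
        apply le_antisymm
        · apply le_sInf
          intro t ht
          exact sInf_le ⟨(id, id), hid, t, hT ht, rfl, sInf_le ht⟩
        · apply le_sInf
          rintro x ⟨p, hp, b, hb, rfl, hle⟩
          exact hle
      rwa [heq] at key
    · intro a ha p hp
      have key := H (p.2 a)
      have heq : sInf {x : L | ∃ q ∈ S, ∃ b ∈ 𝒮, x = q.2 b ∧ p.2 a ≤ q.2 b} = p.2 a := by
        apply le_antisymm
        · exact sInf_le ⟨p, hp, a, ha, rfl, le_rfl⟩
        · apply le_sInf
          rintro x ⟨q, hq, b, hb, rfl, hle⟩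
          exact hle
      rwa [heq] at key
end

section
/- If C is an S-closure operator on a complete lattice L, then the set of its fixed points 𝒮_C = {a ∈ L : C(a) = a} is an S-closure system; conversely, if 𝒮 is an S-closure system, then C_𝒮(a) = ⋀{b ∈ 𝒮 : a ≤ b} is an S-closure operator, and these constructions are mutually inverse: 𝒮 = 𝒮_{C_𝒮} and C = C_{𝒮_C}. -/
/-- C is an S-closure operator. -/
def SClos {L : Type*} [CompleteLattice L]
    (S : Set ((L → L) × (L → L))) (C : L → L) : Prop :=
  (∀ a, a ≤ C a) ∧
  (∀ a b : L, a ≤ b → C a ≤ C b) ∧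
  (∀ a : L, ∀ p ∈ S, C (p.2 (C a)) ≤ p.2 (C a))

/-- 𝒮 is an S-closure system. -/
def SSys {L : Type*} [CompleteLattice L]
    (S : Set ((L → L) × (L → L))) (𝒮 : Set L) : Prop :=
  (∀ T ⊆ 𝒮, sInf T ∈ 𝒮) ∧ (∀ a ∈ 𝒮, ∀ p ∈ S, p.2 a ∈ 𝒮)

/-- S-closure operators and S-closure systems are in mutually inverse
correspondence via fixed points and infima. -/
theorem Sclosure_Ssystem_correspondence {L : Type*} [CompleteLattice L]
    (S : Set ((L → L) × (L → L)))
    (hS : ∀ p ∈ S, ∀ a b : L, p.1 a ≤ b ↔ a ≤ p.2 b)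
    (hid : ((id : L → L), (id : L → L)) ∈ S) :
    (∀ C : L → L, SClos S C → SSys S {a : L | C a = a}) ∧
    (∀ 𝒮 : Set L, SSys S 𝒮 → SClos S (fun a => sInf {b ∈ 𝒮 | a ≤ b})) ∧
    (∀ 𝒮 : Set L, SSys S 𝒮 →
      {a : L | sInf {b ∈ 𝒮 | a ≤ b} = a} = 𝒮) ∧
    (∀ C : L → L, SClos S C →
      ∀ a : L, sInf {b ∈ {x : L | C x = x} | a ≤ b} = C a) := by
  -- basic facts about C_𝒮
  have hfix : ∀ C : L → L, SClos S C → ∀ T ⊆ {a : L | C a = a}, C (sInf T) = sInf T := by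
    intro C ⟨hext, hmono, _⟩ T hT
    refine le_antisymm (le_sInf fun t ht => ?_) (hext _)
    calc C (sInf T) ≤ C t := hmono _ _ (sInf_le ht)
    _ = t := hT ht
  have hmemInf : ∀ 𝒮 : Set L, SSys S 𝒮 → ∀ a : L, sInf {b ∈ 𝒮 | a ≤ b} ∈ 𝒮 := by
    intro 𝒮 h𝒮 a
    exact h𝒮.1 _ (fun b hb => hb.1)
  have hextInf : ∀ (𝒮 : Set L) (a : L), a ≤ sInf {b ∈ 𝒮 | a ≤ b} :=
    fun 𝒮 a => le_sInf fun b hb => hb.2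
  refine ⟨?_, ?_, ?_, ?_⟩
  · rintro C hC
    obtain ⟨hext, hmono, hg⟩ := hC
    refine ⟨fun T hT => hfix C ⟨hext, hmono, hg⟩ T hT, ?_⟩
    intro a ha p hp
    have : C (p.2 (C a)) ≤ p.2 (C a) := hg a p hp
    rw [ha] at this
    exact le_antisymm this (hext _)
  · rintro 𝒮 h𝒮
    refine ⟨hextInf 𝒮, fun a b hab => le_sInf fun c hc => sInf_le ⟨hc.1, hab.trans hc.2⟩, ?_⟩
    intro a p hp
    have h1 : sInf {b ∈ 𝒮 | a ≤ b} ∈ 𝒮 := hmemInf 𝒮 h𝒮 a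
    have h2 : p.2 (sInf {b ∈ 𝒮 | a ≤ b}) ∈ 𝒮 := h𝒮.2 _ h1 p hp
    exact sInf_le ⟨h2, le_rfl⟩
  · rintro 𝒮 h𝒮
    ext a
    simp only [Set.mem_setOf_eq]
    constructor
    · intro h; rw [← h]; exact hmemInf 𝒮 h𝒮 a
    · intro h
      exact le_antisymm (sInf_le ⟨h, le_rfl⟩) (hextInf 𝒮 a)
  · rintro C hC a
    obtain ⟨hext, hmono, hg⟩ := hC
    have hCC : C (C a) = C a := by
      have := hg a _ hid
      exact le_antisymm this (hext _)
    refine le_antisymm (sInf_le ⟨hCC, hext a⟩) (le_sInf fun b hb => ?_)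
    calc C a ≤ C b := hmono _ _ hb.2
    _ = b := hb.1
end

section
/- Let L be a complete residuated lattice and * an idempotent truth-stressing hedge on L (satisfying 1*=1, a* ≤ a, (a→b)* ≤ a*→b*, a**=a*). For a,b ∈ L let c = a* ⊗ b*. Then a* ⊗ b* = (a* ⊗ b*)*, and consequently the set S = {⟨x ↦ a*⊗x, x ↦ a*→x⟩ : a ∈ L} of isotone Galois connections on L is closed under composition. -/
/-- For an idempotent truth-stressing hedge, a* ⊗ b* is a fixed point of the
hedge, hence the parameterization by hedge-multiples is closed under
composition. -/
theorem hedge_mul_fixed_and_closed {L : Type*} [CompleteLattice L]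
    (mul arr : L → L → L) (star : L → L)
    (hassoc : ∀ a b c : L, mul (mul a b) c = mul a (mul b c))
    (hcomm : ∀ a b : L, mul a b = mul b a)
    (hone : ∀ a : L, mul ⊤ a = a)
    (hadj : ∀ a b c : L, mul a b ≤ c ↔ b ≤ arr a c)
    (hs1 : star ⊤ = ⊤)
    (hs2 : ∀ a : L, star a ≤ a)
    (hs3 : ∀ a b : L, star (arr a b) ≤ arr (star a) (star b))
    (hs4 : ∀ a : L, star (star a) = star a) :
    (∀ a b : L, mul (star a) (star b) = star (mul (star a) (star b))) ∧
    (∀ a b : L, ∃ c : L,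
      (∀ x : L, mul (star a) (mul (star b) x) = mul (star c) x) ∧
      (∀ x : L, arr (star b) (arr (star a) x) = arr (star c) x)) := by
  -- a ≤ b iff ⊤ ≤ arr a b
  have hle : ∀ a b : L, a ≤ b ↔ (⊤ : L) ≤ arr a b := by
    intro a b
    rw [← hadj]
    rw [hcomm, hone]
  -- star is monotone
  have hmono : ∀ a b : L, a ≤ b → star a ≤ star b := by
    intro a b hab
    have h1 : arr a b = ⊤ := le_antisymm le_top ((hle a b).mp hab)
    have h2 : star (arr a b) ≤ arr (star a) (star b) := hs3 a b
    rw [h1, hs1] at h2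
    exact (hle _ _).mpr h2
  -- key: mul (star a) (star b) = star (mul (star a) (star b))
  have hkey : ∀ a b : L, mul (star a) (star b) = star (mul (star a) (star b)) := by
    intro a b
    refine le_antisymm ?_ (hs2 _)
    have h1 : star b ≤ arr (star a) (mul (star a) (star b)) :=
      (hadj _ _ _).mp le_rfl
    have h2 : star (star b) ≤ star (arr (star a) (mul (star a) (star b))) :=
      hmono _ _ h1
    rw [hs4] at h2
    have h3 := h2.trans (hs3 (star a) (mul (star a) (star b)))
    rw [hs4] at h3
    exact (hadj _ _ _).mpr h3
  refine ⟨hkey, fun a b => ?_⟩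
  refine ⟨mul (star a) (star b), fun x => ?_, fun x => ?_⟩
  · rw [← hkey, ← hassoc]
  · rw [← hkey]
    -- arr (mul a b) x = arr b (arr a x)
    refine le_antisymm ?_ ?_
    · rw [← hadj]
      rw [hassoc, hadj, hadj]
    · rw [← hadj, ← hadj]
      rw [← hassoc, hadj]
end

section
/- Let L be a complete residuated lattice and * an idempotent truth-stressing hedge on L. Then the set S = {⟨x ↦ a*⊗x, x ↦ a*→x⟩ : a ∈ L}, ordered by pointwise comparison of lower adjoints, with composition ∘ of Galois connections as multiplication, least element the connection for a = 0 and greatest element the identity connection (a = 1), forms a complete commutative integral residuated lattice, with residuum given by ⟨a*⊗-, a*→-⟩ ⇝ ⟨b*⊗-, b*→-⟩ = ⋁{⟨c*⊗-, c*→-⟩ : c ∈ L, a*⊗c* ≤ b*}. -/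
/-- The isotone Galois connection ⟨a*⊗-, a*→-⟩ determined by `a`. -/
def hedgeConn {L : Type*} (mul arr : L → L → L) (star : L → L) (a : L) :
    (L → L) × (L → L) :=
  (fun x => mul (star a) x, fun x => arr (star a) x)

/-- The set of connections induced by an idempotent hedge. -/
def hedgeS {L : Type*} (mul arr : L → L → L) (star : L → L) :
    Set ((L → L) × (L → L)) :=
  Set.range (hedgeConn mul arr star)

/-- Order of connections by pointwise comparison of lower adjoints. -/
def connLE {L : Type*} [CompleteLattice L]
    (p q : (L → L) × (L → L)) : Prop :=
  ∀ x : L, p.1 x ≤ q.1 x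

/-- Composition of isotone Galois connections. -/
def connComp {L : Type*} (p q : (L → L) × (L → L)) : (L → L) × (L → L) :=
  (p.1 ∘ q.1, q.2 ∘ p.2)

/-- `w` is the least upper bound of `T` inside `S'` w.r.t. `connLE`. -/
def connIsLUB {L : Type*} [CompleteLattice L]
    (S' T : Set ((L → L) × (L → L))) (w : (L → L) × (L → L)) : Prop :=
  w ∈ S' ∧ (∀ p ∈ T, connLE p w) ∧
    ∀ u ∈ S', (∀ p ∈ T, connLE p u) → connLE w u

/-- For an idempotent truth-stressing hedge on a complete residuated lattice,
the set S = {⟨a*⊗-, a*→-⟩ : a ∈ L}, ordered by pointwise comparison of lower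
adjoints, with composition as multiplication, the connection for 0 as least
element, the identity connection (a = 1) as greatest and neutral element, and
with the residuum given by the indicated supremum, is a complete commutative
integral residuated lattice. -/
theorem hedge_params_residuated {L : Type*} [CompleteLattice L]
    (mul arr : L → L → L) (star : L → L)
    (hassoc : ∀ a b c : L, mul (mul a b) c = mul a (mul b c))
    (hcomm : ∀ a b : L, mul a b = mul b a)
    (hone : ∀ a : L, mul ⊤ a = a)
    (hadj : ∀ a b c : L, mul a b ≤ c ↔ b ≤ arr a c)
    (hs1 : star ⊤ = ⊤)
    (hs2 : ∀ a : L, star a ≤ a)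
    (hs3 : ∀ a b : L, star (arr a b) ≤ arr (star a) (star b))
    (hs4 : ∀ a : L, star (star a) = star a) :
    -- connLE is a partial order on S (reflexive, transitive, antisymmetric)
    (∀ p ∈ hedgeS mul arr star, connLE p p) ∧
    (∀ p ∈ hedgeS mul arr star, ∀ q ∈ hedgeS mul arr star,
      ∀ r ∈ hedgeS mul arr star, connLE p q → connLE q r → connLE p r) ∧
    (∀ p ∈ hedgeS mul arr star, ∀ q ∈ hedgeS mul arr star,
      connLE p q → connLE q p → p = q) ∧
    -- completeness: every subset of S has a least upper bound in S
    (∀ T ⊆ hedgeS mul arr star,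
      ∃ w, connIsLUB (hedgeS mul arr star) T w) ∧
    -- S is closed under composition; composition is commutative and
    -- associative on S
    (∀ p ∈ hedgeS mul arr star, ∀ q ∈ hedgeS mul arr star,
      connComp p q ∈ hedgeS mul arr star) ∧
    (∀ p ∈ hedgeS mul arr star, ∀ q ∈ hedgeS mul arr star,
      connComp p q = connComp q p) ∧
    (∀ p ∈ hedgeS mul arr star, ∀ q ∈ hedgeS mul arr star,
      ∀ r ∈ hedgeS mul arr star,
      connComp (connComp p q) r = connComp p (connComp q r)) ∧
    -- the connection for a = 1 is the identity connection, is neutral for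
    -- composition, and is the greatest element (integrality)
    (hedgeConn mul arr star ⊤ = ((id : L → L), (id : L → L))) ∧
    (∀ p ∈ hedgeS mul arr star, connComp (hedgeConn mul arr star ⊤) p = p) ∧
    (∀ p ∈ hedgeS mul arr star, connLE p (hedgeConn mul arr star ⊤)) ∧
    -- the connection for a = 0 is the least element
    (∀ p ∈ hedgeS mul arr star, connLE (hedgeConn mul arr star ⊥) p) ∧
    -- the residuum ⇝ : it is the supremum of the indicated set and satisfies
    -- the adjointness property with respect to composition
    (∀ a b : L, ∃ w,
      connIsLUB (hedgeS mul arr star)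
        {r | ∃ c : L, r = hedgeConn mul arr star c ∧
          mul (star a) (star c) ≤ star b} w ∧
      ∀ r ∈ hedgeS mul arr star,
        (connLE (connComp (hedgeConn mul arr star a) r)
            (hedgeConn mul arr star b) ↔ connLE r w)) := by

  have hone' : ∀ a : L, mul a ⊤ = a := fun a => by rw [hcomm]; exact hone a
  have mul_arr_le : ∀ u x : L, mul u (arr u x) ≤ x := fun u x => (hadj u _ x).mpr le_rfl
  have monoR : ∀ (a : L) {x y : L}, x ≤ y → mul a x ≤ mul a y := by
    intro a x y h
    exact (hadj a x _).mpr (h.trans ((hadj a y _).mp le_rfl))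
  have monoL : ∀ {a b : L} (x : L), a ≤ b → mul a x ≤ mul b x := by
    intro a b x h
    rw [hcomm a x, hcomm b x]; exact monoR x h
  have star_mono : ∀ {a b : L}, a ≤ b → star a ≤ star b := by
    intro a b h
    have h1 : arr a b = ⊤ := by
      refine top_unique ((hadj a ⊤ b).mp ?_)
      rw [hone']; exact h
    have h2 := hs3 a b
    rw [h1, hs1] at h2
    have h3 : mul (star a) ⊤ ≤ star b := (hadj _ ⊤ _).mpr h2
    rwa [hone'] at h3
  have fix_mul : ∀ a b : L, star (mul (star a) (star b)) = mul (star a) (star b) := by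
    intro a b
    refine le_antisymm (hs2 _) ?_
    have h1 : star b ≤ arr (star a) (mul (star a) (star b)) := (hadj _ _ _).mp le_rfl
    have h2 : star (star b) ≤ star (arr (star a) (mul (star a) (star b))) := star_mono h1
    have h3 := h2.trans (hs3 _ _)
    rw [hs4, hs4] at h3
    exact (hadj _ _ _).mpr h3
  have arr_mul : ∀ u v x : L, arr v (arr u x) = arr (mul u v) x := by
    intro u v x
    apply le_antisymm
    · refine (hadj (mul u v) _ x).mp ?_
      rw [hassoc]
      exact (monoR u (mul_arr_le v _)).trans (mul_arr_le u x)
    · refine (hadj v _ _).mp ((hadj u _ _).mp ?_)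
      rw [← hassoc]
      exact mul_arr_le _ x
  have connLE_iff : ∀ a b : L,
      (connLE (hedgeConn mul arr star a) (hedgeConn mul arr star b) ↔ star a ≤ star b) := by
    intro a b
    constructor
    · intro h
      have := h ⊤
      simpa [hedgeConn, hone'] using this
    · intro h x
      exact monoL x h
  have conn_eq : ∀ a b : L, star a = star b →
      hedgeConn mul arr star a = hedgeConn mul arr star b := by
    intro a b h
    simp only [hedgeConn, h]
  have comp_eq : ∀ a b : L,
      connComp (hedgeConn mul arr star a) (hedgeConn mul arr star b)
        = hedgeConn mul arr star (mul (star a) (star b)) := by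
    intro a b
    refine Prod.ext (funext fun x => ?_) (funext fun x => ?_)
    · show mul (star a) (mul (star b) x) = mul (star (mul (star a) (star b))) x
      rw [fix_mul, hassoc]
    · show arr (star b) (arr (star a) x) = arr (star (mul (star a) (star b))) x
      rw [fix_mul, arr_mul]
  have id_conn : hedgeConn mul arr star (⊤ : L) = ((id : L → L), (id : L → L)) := by
    refine Prod.ext (funext fun x => ?_) (funext fun x => ?_)
    · show mul (star ⊤) x = x
      rw [hs1, hone]
    · show arr (star ⊤) x = x
      rw [hs1]
      refine le_antisymm ?_ ((hadj ⊤ x x).mp (by rw [hone]))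
      have := mul_arr_le ⊤ x
      rwa [hone] at this
  refine ⟨?_, ?_, ?_, ?_, ?_, ?_, ?_, id_conn, ?_, ?_, ?_, ?_⟩
  · intro p _ x; exact le_rfl
  · intro p _ q _ r _ h1 h2 x; exact (h1 x).trans (h2 x)
  · rintro p ⟨a, rfl⟩ q ⟨b, rfl⟩ h1 h2
    exact conn_eq a b (le_antisymm ((connLE_iff a b).mp h1) ((connLE_iff b a).mp h2))
  · intro T hT
    set M : Set L := {e | star e = e ∧ ∀ p ∈ T, p.1 ⊤ ≤ e} with hM
    refine ⟨hedgeConn mul arr star (star (sInf M)), ⟨_, rfl⟩, ?_, ?_⟩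
    · intro p hp
      obtain ⟨c, rfl⟩ := hT hp
      refine (connLE_iff c _).mpr ?_
      rw [hs4]
      have h1 : star c ≤ sInf M := by
        refine le_sInf fun e he => ?_
        have := he.2 _ hp
        simpa [hedgeConn, hone'] using this
      have := star_mono h1
      rwa [hs4] at this
    · intro u hu hub
      obtain ⟨d, rfl⟩ := hu
      refine (connLE_iff _ d).mpr ?_
      rw [hs4]
      have hdM : star d ∈ M := by
        refine ⟨hs4 d, fun p hp => ?_⟩
        have := hub p hp ⊤
        simpa [hedgeConn, hone'] using this
      have := star_mono (sInf_le hdM)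
      rwa [hs4] at this
  · rintro p ⟨a, rfl⟩ q ⟨b, rfl⟩
    rw [comp_eq]
    exact ⟨_, rfl⟩
  · rintro p ⟨a, rfl⟩ q ⟨b, rfl⟩
    rw [comp_eq, comp_eq, hcomm]
  · intro p _ q _ r _
    rfl
  · intro p _
    rw [id_conn]
    rfl
  · rintro p ⟨a, rfl⟩
    refine (connLE_iff a ⊤).mpr ?_
    rw [hs1]; exact le_top
  · rintro p ⟨a, rfl⟩
    exact (connLE_iff ⊥ a).mpr (star_mono bot_le)
  · intro a b
    set e : L := star (arr (star a) (star b)) with he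
    have hse : star e = e := hs4 _
    have he_le : e ≤ arr (star a) (star b) := hs2 _
    refine ⟨hedgeConn mul arr star e, ⟨⟨_, rfl⟩, ?_, ?_⟩, ?_⟩
    · rintro p ⟨c, rfl, hc⟩
      refine (connLE_iff c e).mpr ?_
      rw [hse]
      have h1 : star c ≤ arr (star a) (star b) := (hadj _ _ _).mp hc
      have := star_mono h1
      rwa [hs4] at this
    · intro u hu hub
      refine hub _ ⟨e, rfl, ?_⟩
      rw [hse]
      exact (hadj _ _ _).mpr he_le
    · rintro r ⟨d, rfl⟩
      rw [comp_eq]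
      constructor
      · intro h
        have h1 := (connLE_iff _ b).mp h
        rw [fix_mul] at h1
        refine (connLE_iff d e).mpr ?_
        rw [hse]
        have h2 : star d ≤ arr (star a) (star b) := (hadj _ _ _).mp h1
        have := star_mono h2
        rwa [hs4] at this
      · intro h
        have h1 := (connLE_iff d e).mp h
        rw [hse] at h1
        refine (connLE_iff _ b).mpr ?_
        rw [fix_mul]
        exact (hadj _ _ _).mpr (h1.trans he_le)
end
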